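/- Let α > 0 and let w(θ, t) = A (sin(3θ/t))^{t/3} for θ ∈ (0, tπ/6) and t ∈ (0, t₀], where t₀ < min(3, 6/(1 + 1/α)). Then there exist constants A₀ > 0 and ε₀ > 0 depending only on t₀ and α such that for all A ≥ A₀, w_t − α w^{1+1/α} (w_{θθ} + w) ≥ ε₀ (sin(3θ/t))^{((2α+1)/(3α))t − 2} ≥ 0 on {(θ,t) : 0 < θ < tπ/6, 0 < t < t₀}. -/

import Mathlib

open Real
lemma aux_log_le_div_exp {z : ℝ} (hz : 0 < z) : Real.log z ≤ z / Real.exp 1 := by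
  have h := Real.log_le_sub_one_of_pos (x := z / Real.exp 1) (by positivity)
  rw [Real.log_div hz.ne' (Real.exp_pos 1).ne', Real.log_exp] at h
  linarith

lemma aux_mul_neg_log {y : ℝ} (h0 : 0 < y) : y * (-Real.log y) ≤ (Real.exp 1)⁻¹ := by
  have h := aux_log_le_div_exp (z := y⁻¹) (by positivity)
  rw [Real.log_inv] at h
  calc y * (-Real.log y) ≤ y * (y⁻¹ / Real.exp 1) := by
        exact mul_le_mul_of_nonneg_left h h0.le
    _ = (Real.exp 1)⁻¹ := by field_simp

lemma aux_mul_cos_le_sin {x : ℝ} (h1 : 0 < x) (h2 : x < π/2) :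
    x * Real.cos x ≤ Real.sin x := by
  have hc : 0 < Real.cos x := Real.cos_pos_of_mem_Ioo ⟨by linarith [Real.pi_pos], h2⟩
  have ht := Real.lt_tan h1 h2
  rw [Real.tan_eq_sin_div_cos] at ht
  calc x * Real.cos x ≤ (Real.sin x / Real.cos x) * Real.cos x := by nlinarith
    _ = Real.sin x := by field_simp

set_option maxHeartbeats 1000000 in
theorem stmt8 (α t₀ : ℝ) (hα : 0 < α) (ht₀ : 0 < t₀)
    (ht₀' : t₀ < min 3 (6 / (1 + 1/α))) :
    ∃ A₀ : ℝ, 0 < A₀ ∧ ∃ ε₀ : ℝ, 0 < ε₀ ∧ ∀ A : ℝ, A₀ ≤ A → ∀ θ t : ℝ,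
      0 < θ → θ < t * Real.pi / 6 → 0 < t → t < t₀ →
      (ε₀ * Real.sin (3*θ/t) ^ ((2*α+1)/(3*α) * t - 2) ≤
        deriv (fun τ => A * Real.sin (3*θ/τ) ^ (τ/3)) t
          - α * (A * Real.sin (3*θ/t) ^ (t/3)) ^ (1 + 1/α) *
            (deriv (deriv (fun x => A * Real.sin (3*x/t) ^ (t/3))) θ
              + A * Real.sin (3*θ/t) ^ (t/3))) ∧
      0 ≤ ε₀ * Real.sin (3*θ/t) ^ ((2*α+1)/(3*α) * t - 2) := by
  have hα' : (0:ℝ) < 1 + 1/α := by positivity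
  have ht3 : t₀ < 3 := lt_of_lt_of_le ht₀' (min_le_left _ _)
  have ht6 : t₀ < 6 / (1 + 1/α) := lt_of_lt_of_le ht₀' (min_le_right _ _)
  have ht6' : t₀ * (1 + 1/α) < 6 := by
    rw [lt_div_iff₀ hα'] at ht6; linarith
  have hδ : 0 < 2 - t₀ * (α + 1) / (3 * α) := by
    have hx : t₀ * (α+1) / (3*α) = t₀ * (1+1/α) / 3 := by field_simp
    rw [hx]; linarith
  set δ : ℝ := 2 - t₀ * (α + 1) / (3 * α) with hδdef
  set M : ℝ := 1 + (δ * Real.exp 1)⁻¹ with hMdef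
  have hM : 0 < M := by positivity
  have hc₁ : 0 < 3 / t₀ - 1 := by
    rw [sub_pos, lt_div_iff₀ ht₀]; linarith
  set c₁ : ℝ := 3 / t₀ - 1 with hc₁def
  set R : ℝ := (M/3 + 1) / (α * c₁) with hRdef
  have hR : 0 < R := by positivity
  refine ⟨max 1 R, lt_of_lt_of_le one_pos (le_max_left _ _), 1, one_pos, ?_⟩
  intro A hA θ t hθ hθ' ht htt₀
  have hA1 : (1:ℝ) ≤ A := le_trans (le_max_left _ _) hA
  have hAR : R ≤ A := le_trans (le_max_right _ _) hA
  have hApos : (0:ℝ) < A := by linarith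
  have hb0 : 0 < 3*θ/t := by positivity
  have hb2 : 3*θ/t < π/2 := by
    rw [div_lt_iff₀ ht]; nlinarith [Real.pi_pos]
  set b : ℝ := 3*θ/t with hbdef
  have hs0 : 0 < Real.sin b := Real.sin_pos_of_pos_of_lt_pi hb0 (by nlinarith [Real.pi_pos])
  set s : ℝ := Real.sin b with hsdef
  have hs1 : s ≤ 1 := Real.sin_le_one b
  have hlogs : Real.log s ≤ 0 := Real.log_nonpos hs0.le hs1
  set p : ℝ := (2*α+1)/(3*α) * t - 2 with hpdef
  have hsp : 0 < s ^ p := Real.rpow_pos_of_pos hs0 p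
  constructor
  swap
  · positivity
  -- time derivative
  have hd1 : HasDerivAt (fun τ : ℝ => 3*θ/τ) (3*θ * -((t:ℝ)^2)⁻¹) t := by
    simpa [div_eq_mul_inv] using (hasDerivAt_inv (ne_of_gt ht)).const_mul (3*θ)
  have hd3 : HasDerivAt (fun τ : ℝ => τ/3) ((1:ℝ)/3) t := by
    simpa using (hasDerivAt_id t).div_const 3
  have hdT : HasDerivAt (fun τ : ℝ => A * Real.sin (3*θ/τ) ^ (τ/3))
      (A * ((Real.cos b * (3*θ * -((t:ℝ)^2)⁻¹)) * (t/3) * s ^ (t/3 - 1)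
        + (1/3) * s ^ (t/3) * Real.log s)) t :=
    (hd1.sin.rpow hd3 hs0).const_mul A
  -- second spatial derivative
  have hgD : ∀ y, 0 < Real.sin (3*y/t) →
      HasDerivAt (fun z : ℝ => A * Real.sin (3*z/t) ^ (t/3))
        (A * ((Real.cos (3*y/t) * (3/t)) * (t/3) * Real.sin (3*y/t) ^ (t/3 - 1))) y := by
    intro y hy
    have h1 : HasDerivAt (fun z : ℝ => 3*z/t) (3/t) y := by
      simpa using ((hasDerivAt_id y).const_mul 3).div_const t
    exact (h1.sin.rpow_const (p := t/3) (Or.inl (ne_of_gt hy))).const_mul A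
  have hU : IsOpen {y : ℝ | 0 < Real.sin (3*y/t)} :=
    isOpen_lt continuous_const (by fun_prop)
  have hθU : θ ∈ {y : ℝ | 0 < Real.sin (3*y/t)} := hs0
  have hEq : deriv (fun z : ℝ => A * Real.sin (3*z/t) ^ (t/3))
      =ᶠ[nhds θ] fun y => A * ((Real.cos (3*y/t) * (3/t)) * (t/3) * Real.sin (3*y/t) ^ (t/3 - 1)) := by
    filter_upwards [hU.mem_nhds hθU] with y hy
    exact (hgD y hy).deriv
  have h1θ : HasDerivAt (fun z : ℝ => 3*z/t) (3/t) θ := by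
    simpa using ((hasDerivAt_id θ).const_mul 3).div_const t
  have hF : HasDerivAt (fun z : ℝ => Real.cos (3*z/t) * (3/t) * (t/3))
      (-Real.sin b * (3/t) * (3/t) * (t/3)) θ :=
    ((h1θ.cos).mul_const (3/t)).mul_const (t/3)
  have hP : HasDerivAt (fun z : ℝ => Real.sin (3*z/t) ^ (t/3 - 1))
      ((Real.cos b * (3/t)) * (t/3 - 1) * s ^ (t/3 - 1 - 1)) θ :=
    h1θ.sin.rpow_const (Or.inl (ne_of_gt hs0))
  have hD : HasDerivAt (fun y : ℝ => A * ((Real.cos (3*y/t) * (3/t)) * (t/3) * Real.sin (3*y/t) ^ (t/3 - 1)))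
      (A * ((-Real.sin b * (3/t) * (3/t) * (t/3)) * s ^ (t/3 - 1)
        + (Real.cos b * (3/t) * (t/3)) * ((Real.cos b * (3/t)) * (t/3 - 1) * s ^ (t/3 - 1 - 1)))) θ := by
    exact (hF.mul hP).const_mul A
  have hW2 : deriv (deriv (fun z : ℝ => A * Real.sin (3*z/t) ^ (t/3))) θ
      = A * ((-Real.sin b * (3/t) * (3/t) * (t/3)) * s ^ (t/3 - 1)
        + (Real.cos b * (3/t) * (t/3)) * ((Real.cos b * (3/t)) * (t/3 - 1) * s ^ (t/3 - 1 - 1))) := by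
    rw [hEq.deriv_eq]; exact hD.deriv
  -- rpow atoms and relations
  set u : ℝ := s ^ (t/3 - 2) with hudef
  have hu : 0 < u := Real.rpow_pos_of_pos hs0 _
  have hst31 : s ^ (t/3 - 1) = u * s := by
    have h2 : s ^ (t/3 - 2 + 1) = s ^ (t/3 - 2) * s := by
      rw [Real.rpow_add hs0, Real.rpow_one]
    rw [hudef, ← h2]
    congr 1
    ring
  have hst3 : s ^ (t/3) = u * s * s := by
    have h2 : s ^ (t/3 - 2 + 1 + 1) = s ^ (t/3 - 2) * s * s := by
      rw [Real.rpow_add hs0, Real.rpow_add hs0, Real.rpow_one]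
    rw [hudef, ← h2]
    congr 1
    ring
  have hst311 : s ^ (t/3 - 1 - 1) = u := by
    rw [hudef]
    congr 1
    ring
  have hc2 : Real.cos b * Real.cos b = 1 - s * s := by
    have h := Real.sin_sq_add_cos_sq b
    rw [← hsdef] at h
    linear_combination h
  -- sum identity
  have hWsum : A * ((-Real.sin b * (3/t) * (3/t) * (t/3)) * s ^ (t/3 - 1)
        + (Real.cos b * (3/t) * (t/3)) * ((Real.cos b * (3/t)) * (t/3 - 1) * s ^ (t/3 - 1 - 1)))
      + A * s ^ (t/3) = A * (1 - 3/t) * u := by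
    rw [← hsdef, hst31, hst311, hst3]
    have ht' : t ≠ 0 := ne_of_gt ht
    field_simp
    ring_nf
    have hb' : θ * t⁻¹ * 3 = b := by rw [hbdef]; ring
    linear_combination (t - 3) * hc2
  -- time derivative lower bound
  have hbc : b * Real.cos b ≤ s := by
    rw [hsdef]; exact aux_mul_cos_le_sin hb0 hb2
  have hB1 : s ^ (t/3) * (1 - Real.log s) ≤ M * s ^ p := by
    have hδ' : δ ≤ t/3 - p := by
      have h1 : t/3 - p = 2 - t * (α + 1) / (3 * α) := by
        rw [hpdef]; field_simp; ring
      rw [h1, hδdef]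
      have h3 : (0:ℝ) < 3 * α := by linarith
      have h4 : t * (α + 1) / (3 * α) ≤ t₀ * (α + 1) / (3 * α) :=
        (div_le_div_iff_of_pos_right h3).mpr (by nlinarith)
      linarith
    have hqp0 : 0 ≤ t/3 - p := le_trans hδ.le hδ'
    have e1 : s ^ (t/3) = s ^ p * s ^ (t/3 - p) := by
      rw [← Real.rpow_add hs0]; ring_nf
    have h3 : s ^ (t/3 - p) ≤ 1 := Real.rpow_le_one hs0.le hs1 hqp0
    have h4 : s ^ (t/3 - p) * (-Real.log s) ≤ (δ * Real.exp 1)⁻¹ := by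
      have hle : s ^ (t/3 - p) ≤ s ^ δ := Real.rpow_le_rpow_of_exponent_ge hs0 hs1 hδ'
      have hsd0 : 0 < s ^ δ := Real.rpow_pos_of_pos hs0 δ
      calc s ^ (t/3 - p) * (-Real.log s) ≤ s ^ δ * (-Real.log s) :=
            mul_le_mul_of_nonneg_right hle (by linarith)
        _ = δ⁻¹ * (s ^ δ * (-Real.log (s ^ δ))) := by
            rw [Real.log_rpow hs0]; field_simp
        _ ≤ δ⁻¹ * (Real.exp 1)⁻¹ :=
            mul_le_mul_of_nonneg_left (aux_mul_neg_log hsd0) (by positivity)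
        _ = (δ * Real.exp 1)⁻¹ := (mul_inv δ _).symm
    calc s ^ (t/3) * (1 - Real.log s)
        = s ^ p * (s ^ (t/3 - p) + s ^ (t/3 - p) * (-Real.log s)) := by rw [e1]; ring
      _ ≤ s ^ p * (1 + (δ * Real.exp 1)⁻¹) :=
          mul_le_mul_of_nonneg_left (by linarith) hsp.le
      _ = M * s ^ p := by rw [hMdef]; ring
  have h5 : b * Real.cos b * s ^ (t/3 - 1) ≤ s ^ (t/3) := by
    rw [hst31, hst3]
    calc b * Real.cos b * (u * s) ≤ s * (u * s) :=
          mul_le_mul_of_nonneg_right hbc (by positivity)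
      _ = u * s * s := by ring
  have hTVge : -(A/3 * (M * s ^ p)) ≤
      A * ((Real.cos b * (3*θ * -((t:ℝ)^2)⁻¹)) * (t/3) * s ^ (t/3 - 1)
        + (1/3) * s ^ (t/3) * Real.log s) := by
    have hTV_eq : A * ((Real.cos b * (3*θ * -((t:ℝ)^2)⁻¹)) * (t/3) * s ^ (t/3 - 1)
        + (1/3) * s ^ (t/3) * Real.log s)
        = A/3 * (s ^ (t/3) * Real.log s - b * Real.cos b * s ^ (t/3 - 1)) := by
      rw [hbdef]
      have ht' : t ≠ 0 := ne_of_gt ht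
      field_simp
      ring
    rw [hTV_eq]
    have h6 : A/3 * (b * Real.cos b * s ^ (t/3 - 1)) ≤ A/3 * s ^ (t/3) :=
      mul_le_mul_of_nonneg_left h5 (by positivity)
    have h7 : A/3 * (s ^ (t/3) * (1 - Real.log s)) ≤ A/3 * (M * s ^ p) :=
      mul_le_mul_of_nonneg_left hB1 (by positivity)
    linarith [h6, h7]
  -- the power term
  have hpow_eq : (A * s ^ (t/3)) ^ (1 + 1/α) = A ^ (1 + 1/α) * s ^ ((t/3) * (1 + 1/α)) := by
    rw [Real.mul_rpow hApos.le (Real.rpow_pos_of_pos hs0 _).le, ← Real.rpow_mul hs0.le]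
  have hEu : s ^ ((t/3) * (1 + 1/α)) * u = s ^ p := by
    rw [hudef, ← Real.rpow_add hs0, hpdef]
    congr 1
    field_simp
    ring
  -- key constant bound
  have hApow : 0 < A ^ (1 + 1/α) := Real.rpow_pos_of_pos hApos _
  have hKey : 1 + A * M/3 ≤ α * A ^ (1 + 1/α) * A * (3/t - 1) := by
    have hA1α : R ≤ A ^ (1 + 1/α) := by
      have h1 : max 1 R ≤ (max 1 R) ^ (1 + 1/α) := by
        nth_rewrite 1 [← Real.rpow_one (max 1 R)]
        exact Real.rpow_le_rpow_of_exponent_le (le_max_left _ _)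
          (by linarith [one_div_pos.mpr hα])
      have h2 : (max 1 R) ^ (1 + 1/α) ≤ A ^ (1 + 1/α) :=
        Real.rpow_le_rpow (by positivity) hA hα'.le
      calc R ≤ max 1 R := le_max_right _ _
        _ ≤ _ := h1
        _ ≤ _ := h2
    have hct : c₁ ≤ 3/t - 1 := by
      have h8 : 3/t₀ < 3/t := div_lt_div_of_pos_left (by norm_num) ht htt₀
      rw [hc₁def]; linarith
    have hRid : α * c₁ * R = M/3 + 1 := by
      rw [hRdef]; field_simp
    have s1 : R * c₁ ≤ A ^ (1 + 1/α) * (3/t - 1) :=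
      mul_le_mul hA1α hct hc₁.le hApow.le
    have s2 : α * A * (R * c₁) ≤ α * A * (A ^ (1 + 1/α) * (3/t - 1)) :=
      mul_le_mul_of_nonneg_left s1 (by positivity)
    have s3 : α * A * (R * c₁) = A * (M/3 + 1) := by
      linear_combination A * hRid
    linarith [s2, s3, hA1]
  -- assemble
  rw [hdT.deriv, hW2, hWsum, hpow_eq]
  have hP2 : α * (A ^ (1 + 1/α) * s ^ (t/3 * (1 + 1/α))) * (A * (1 - 3/t) * u)
      = -(α * A ^ (1 + 1/α) * A * (3/t - 1) * s ^ p) := by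
    rw [← hEu]; ring
  rw [hP2]
  have hKmul : (1 + A * M/3) * s ^ p ≤ α * A ^ (1 + 1/α) * A * (3/t - 1) * s ^ p :=
    mul_le_mul_of_nonneg_right hKey hsp.le
  linarith [hTVge, hKmul]
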